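/- Let q be an odd prime power, d a non-square in F_q*, and α in F_{q^2} with α² = d. Let γ be an element of Q = {γ in F_{q^2} : γ^{q+1} = 1}, written γ = x + y*α with x, y in F_q. If γ ≠ 1, then ψ(α*γ) = y*d/(x−1). If moreover γ ≠ −1, then ψ(α*γ²) = x/y. -/

import Mathlib

/-- for γ = x + y·α in Q = {γ : γ^{q+1} = 1}: if γ ≠ 1 then
ψ(αγ) = yd/(x−1); if moreover γ ≠ −1 then ψ(αγ²) = x/y. -/
theorem stmt_17 (q : ℕ) (hq : Odd q) (hq' : IsPrimePow q)
    (F : Type*) [Field F] (hF : Nat.card F = q ^ 2)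
    (K : Subfield F) (hK : Nat.card K = q)
    (d : F) (hdK : d ∈ K) (hd0 : d ≠ 0) (hdns : ¬ ∃ c ∈ K, c * c = d)
    (α : F) (hα : α ^ 2 = d)
    (ψ : F → F) (hψ : ∀ γ : F, γ ≠ α → ψ γ = (α * γ + d) / (γ - α)) (hψα : ψ α = α)
    (γ x y : F) (hγQ : γ ^ (q + 1) = 1)
    (hx : x ∈ K) (hy : y ∈ K) (hγ : γ = x + y * α) :
    (γ ≠ 1 → ψ (α * γ) = y * d / (x - 1)) ∧
    (γ ≠ 1 → γ ≠ -1 → ψ (α * γ ^ 2) = x / y) := by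
  subst hγ
  obtain ⟨p, k, hp, hk, rfl⟩ := hq'
  have hpp : p.Prime := hp.nat_prime
  have hq0 : p ^ k ≠ 0 := pow_ne_zero _ hpp.pos.ne'
  haveI : Finite F := Nat.finite_of_card_ne_zero (by rw [hF]; positivity)
  haveI : Fintype F := Fintype.ofFinite F
  haveI : Finite K := Nat.finite_of_card_ne_zero (by rw [hK]; exact hq0)
  haveI : Fintype K := Fintype.ofFinite K
  have hcardF : Fintype.card F = (p ^ k) ^ 2 := by rw [← Nat.card_eq_fintype_card]; exact hF
  have hcardK : Fintype.card K = p ^ k := by rw [← Nat.card_eq_fintype_card]; exact hK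
  -- characteristic of F is p
  haveI hpF : CharP F (ringChar F) := ringChar.charP F
  obtain ⟨m, hm, hcard⟩ := FiniteField.card F (ringChar F)
  have hrc : ringChar F = p := by
    have h1 : p ∣ (ringChar F) ^ (m : ℕ) := by
      rw [← hcard, hcardF, ← pow_mul]
      exact dvd_pow_self p (by positivity)
    have h2 : p ∣ ringChar F := hpp.dvd_of_dvd_pow h1
    exact ((Nat.prime_dvd_prime_iff_eq hpp hm).mp h2).symm
  haveI hpF' : CharP F p := hrc ▸ hpF
  obtain ⟨t, ht⟩ := hq
  -- ring char of K is not 2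
  have hK2 : ringChar K ≠ 2 := by
    intro h
    have := FiniteField.even_card_of_char_two h
    rw [hcardK] at this
    omega
  -- d as element of K is not a square
  have hdK0 : (⟨d, hdK⟩ : K) ≠ 0 := by
    intro h
    exact hd0 (by simpa using Subtype.ext_iff.mp h)
  have hdnsK : ¬ IsSquare (⟨d, hdK⟩ : K) := by
    rintro ⟨r, hr⟩
    refine hdns ⟨r.1, r.2, ?_⟩
    have := (Subtype.ext_iff.mp hr).symm
    push_cast at this
    exact this
  have hdm1 : (⟨d, hdK⟩ : K) ^ (p ^ k / 2) = -1 := by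
    rcases FiniteField.pow_dichotomy hK2 hdK0 with h | h
    · exact absurd ((FiniteField.isSquare_iff hK2 hdK0).mpr h) hdnsK
    · rwa [hcardK] at h
  have hdF : d ^ (p ^ k / 2) = -1 := by
    have := Subtype.ext_iff.mp hdm1
    push_cast at this
    exact this
  have hα0 : α ≠ 0 := by
    intro h
    exact hd0 (by rw [← hα, h]; ring)
  -- α^q = -α
  have ht2 : p ^ k / 2 = t := by omega
  have hαq : α ^ (p ^ k) = -α := by
    have : α ^ (p ^ k) = (α ^ 2) ^ t * α := by rw [← pow_mul, ← pow_succ, ht, two_mul]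
    rw [this, hα, ← ht2, hdF]; ring
  -- x^q = x, y^q = y
  have hxq : x ^ (p ^ k) = x := by
    have h := FiniteField.pow_card (⟨x, hx⟩ : K)
    rw [hcardK] at h
    have h2 := Subtype.ext_iff.mp h
    push_cast at h2
    exact h2
  have hyq : y ^ (p ^ k) = y := by
    have h := FiniteField.pow_card (⟨y, hy⟩ : K)
    rw [hcardK] at h
    have h2 := Subtype.ext_iff.mp h
    push_cast at h2
    exact h2
  haveI := Fact.mk hpp
  -- γ^q = x - y α and the key norm relation
  have hγq : (x + y * α) ^ (p ^ k) = x - y * α := by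
    rw [add_pow_char_pow, mul_pow, hxq, hyq, hαq]; ring
  have key : x ^ 2 - y ^ 2 * d = 1 := by
    have h := hγQ
    rw [pow_succ, hγq] at h
    linear_combination h + y ^ 2 * hα
  constructor
  · intro h1
    have hx1 : x ≠ 1 := by
      intro h
      have hy0 : y = 0 := by
        have : y ^ 2 * d = 0 := by rw [h] at key; linear_combination -key
        rcases mul_eq_zero.mp this with h' | h'
        · exact pow_eq_zero_iff (by norm_num) |>.mp h'
        · exact absurd h' hd0
      exact h1 (by rw [h, hy0]; ring)
    have hne : α * (x + y * α) ≠ α := by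
      intro h
      exact h1 (mul_left_cancel₀ hα0 (by rw [h, mul_one]))
    rw [hψ _ hne]
    have hden : α * (x + y * α) - α ≠ 0 := sub_ne_zero.mpr hne
    have hx1' : x - 1 ≠ 0 := sub_ne_zero.mpr hx1
    rw [div_eq_div_iff hden hx1']
    ring_nf
    linear_combination (x ^ 2 + α * x * y - y ^ 2 * d - x - α * y) * hα + d * key
  · intro h1 h2
    have hy0 : y ≠ 0 := by
      intro h
      subst h
      rcases (mul_self_eq_one_iff (a := x)).mp (by linear_combination key) with h' | h'
      · exact h1 (by rw [h']; ring)
      · exact h2 (by rw [h']; ring)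
    have hγ2 : (x + y * α) ^ 2 ≠ 1 := by
      intro h
      rcases (mul_self_eq_one_iff (a := x + y * α)).mp (by linear_combination h) with h' | h'
      · exact h1 h'
      · exact h2 h'
    have hne : α * (x + y * α) ^ 2 ≠ α := by
      intro h
      exact hγ2 (mul_left_cancel₀ hα0 (by rw [h, mul_one]))
    rw [hψ _ hne]
    have hden : α * (x + y * α) ^ 2 - α ≠ 0 := sub_ne_zero.mpr hne
    rw [div_eq_div_iff hden hy0]
    ring_nf
    linear_combination (-(x ^ 2 * y) + α * x * y ^ 2 + y ^ 3 * (α ^ 2 + d)) * hα - (α * x + d * y) * key
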